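/- Let G be a finite simple graph with maximum degree at most Δ ≥ 2, and let x, y be vertices at distance t ≥ 3. Then n_G(x,y)^2 ≤ Δ^2 (Δ-1)^2 · (⌊Δ/2⌋ · ⌈Δ/2⌉)^(t-3), i.e. n_G(x,y) ≤ Δ(Δ-1) · (⌊Δ/2⌋⌈Δ/2⌉)^((t-3)/2). -/

import Mathlib

open Finset SimpleGraph
set_option linter.unusedSectionVars false

variable {V : Type} [Fintype V] [DecidableEq V]

/-- number of neighbors of `v` that are one step closer to `u`. -/
noncomputable def dnext (G : SimpleGraph V) [DecidableRel G.Adj] (u v : V) : ℕ :=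
  ((G.neighborFinset v).filter (fun w => G.dist w u + 1 = G.dist v u)).card

/-- product of `D` over all vertices of the walk except the last. -/
def walkProdInit (G : SimpleGraph V) (D : V → ℕ) {a b : V} (P : G.Walk a b) : ℕ :=
  (P.support.dropLast.map D).prod

/-- product of `D` over all vertices of the walk except the first. -/
def walkProdTail (G : SimpleGraph V) (D : V → ℕ) {a b : V} (P : G.Walk a b) : ℕ :=
  (P.support.tail.map D).prod

variable {G : SimpleGraph V} [DecidableRel G.Adj]

lemma walkProdInit_nil (D : V → ℕ) (a : V) : walkProdInit G D (SimpleGraph.Walk.nil' a) = 1 := by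
  simp [walkProdInit]

lemma walkProdTail_nil (D : V → ℕ) (a : V) : walkProdTail G D (SimpleGraph.Walk.nil' a) = 1 := by
  simp [walkProdTail]

lemma walkProdInit_cons (D : V → ℕ) {a b c : V} (h : G.Adj a b) (q : G.Walk b c) :
    walkProdInit G D (q.cons h) = D a * walkProdInit G D q := by
  unfold walkProdInit
  rw [SimpleGraph.Walk.support_cons, q.support_eq_cons, List.dropLast_cons₂]
  simp

lemma walkProdTail_cons (D : V → ℕ) {a b c : V} (h : G.Adj a b) (q : G.Walk b c) :
    walkProdTail G D (q.cons h) = D b * walkProdTail G D q := by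
  unfold walkProdTail
  rw [SimpleGraph.Walk.support_cons, List.tail_cons, q.support_eq_cons]
  simp only [List.map_cons, List.prod_cons, List.tail_cons]

lemma walkProdInit_reverse (D : V → ℕ) {a b : V} (P : G.Walk a b) :
    walkProdInit G D P.reverse = walkProdTail G D P := by
  unfold walkProdInit walkProdTail
  rw [SimpleGraph.Walk.support_reverse]
  have : P.support.reverse.dropLast = P.support.tail.reverse := by
    have h := List.tail_reverse (l := P.support.reverse)
    rw [List.reverse_reverse] at h
    rw [h, List.reverse_reverse]
  rw [this, List.map_reverse, List.prod_reverse]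

lemma dnext_le_degree (u v : V) : dnext G u v ≤ G.degree v := by
  classical
  exact (Finset.card_filter_le _ _).trans (le_of_eq rfl)

lemma dnext_pos_of_adj {u v w : V} (h : G.Adj v w) (hd : G.dist w u + 1 = G.dist v u) :
    1 ≤ dnext G u v := by
  apply Finset.card_pos.mpr
  exact ⟨w, Finset.mem_filter.mpr ⟨G.mem_neighborFinset v w |>.mpr h, hd⟩⟩

lemma dnext_pos_of_dist {u v : V} (h : G.dist v u ≠ 0) : 1 ≤ dnext G u v := by
  obtain ⟨P, hP⟩ := SimpleGraph.exists_walk_of_dist_ne_zero h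
  cases P with
  | nil => rw [← hP] at h; simp at h
  | @cons _ w _ hadj q =>
    apply dnext_pos_of_adj hadj
    have h1 : G.dist w u ≤ q.length := SimpleGraph.dist_le q
    have h2 : G.dist v u ≤ G.dist w u + 1 := by
      obtain ⟨R, hR⟩ := (q.reachable).exists_walk_length_eq_dist
      simpa [hR] using SimpleGraph.dist_le (R.cons hadj)
    simp only [SimpleGraph.Walk.length_cons] at hP
    omega

lemma dnext_eq_one_of_dist_one {u v : V} (hd : G.dist v u = 1) : dnext G u v = 1 := by
  have hadj : G.Adj v u := SimpleGraph.dist_eq_one_iff_adj.mp hd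
  rw [dnext]
  convert Finset.card_singleton u
  ext w
  simp only [Finset.mem_filter, SimpleGraph.mem_neighborFinset, Finset.mem_singleton, hd]
  constructor
  · rintro ⟨hw, hwd⟩
    have hwu : G.dist w u = 0 := by omega
    rcases SimpleGraph.dist_eq_zero_iff_eq_or_not_reachable.mp hwu with rfl | hnr
    · rfl
    · exact absurd ((G.adj_symm hw).reachable.trans hadj.reachable) hnr
  · rintro rfl
    exact ⟨hadj, by simp [SimpleGraph.dist_self]⟩

lemma dnext_add_dnext_le {x y v : V} (h : G.dist x v + G.dist v y = G.dist x y) :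
    dnext G y v + dnext G x v ≤ G.degree v := by
  classical
  rw [dnext, dnext, ← Finset.card_union_of_disjoint, SimpleGraph.degree]
  · apply Finset.card_le_card
    exact Finset.union_subset (Finset.filter_subset _ _) (Finset.filter_subset _ _)
  · rw [Finset.disjoint_left]
    rintro w hw1 hw2
    obtain ⟨hwadj, hwy⟩ := Finset.mem_filter.mp hw1
    obtain ⟨-, hwx⟩ := Finset.mem_filter.mp hw2
    rw [SimpleGraph.mem_neighborFinset] at hwadj
    rw [show G.dist v x = G.dist x v from SimpleGraph.dist_comm] at hwx
    -- w is reachable to y and to x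
    have hrwy : G.Reachable w y := by
      by_cases h0 : G.dist w y = 0
      · rcases SimpleGraph.dist_eq_zero_iff_eq_or_not_reachable.mp h0 with rfl | hnr
        · rfl
        · exfalso; apply hnr
          have hvy : G.Adj v y := SimpleGraph.dist_eq_one_iff_adj.mp (by omega)
          exact (G.adj_symm hwadj).reachable.trans hvy.reachable
      · exact SimpleGraph.Reachable.of_dist_ne_zero h0
    have hrwx : G.Reachable w x := by
      by_cases h0 : G.dist w x = 0
      · rcases SimpleGraph.dist_eq_zero_iff_eq_or_not_reachable.mp h0 with rfl | hnr
        · rfl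
        · exfalso; apply hnr
          have hvx : G.Adj v x := SimpleGraph.dist_eq_one_iff_adj.mp (by rw [SimpleGraph.dist_comm]; omega)
          exact (G.adj_symm hwadj).reachable.trans hvx.reachable
      · exact SimpleGraph.Reachable.of_dist_ne_zero h0
    obtain ⟨R1, hR1⟩ := hrwx.exists_walk_length_eq_dist
    obtain ⟨R2, hR2⟩ := hrwy.exists_walk_length_eq_dist
    have hle : G.dist x y ≤ G.dist w x + G.dist w y := by
      have := SimpleGraph.dist_le (R1.reverse.append R2)
      simpa [hR1, hR2] using this
    omega

lemma mul_le_half_mul_half {a b D : ℕ} (h : a + b ≤ D) : a * b ≤ (D / 2) * ((D + 1) / 2) := by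
  obtain ⟨m, rfl | rfl⟩ := Nat.even_or_odd' D
  · have h1 : (2 * m) / 2 = m := by omega
    have h2 : (2 * m + 1) / 2 = m := by omega
    rw [h1, h2]
    zify at h ⊢
    nlinarith [sq_nonneg ((a : ℤ) - b), sq_nonneg ((a : ℤ) + b)]
  · have h1 : (2 * m + 1) / 2 = m := by omega
    have h2 : (2 * m + 1 + 1) / 2 = m + 1 := by omega
    rw [h1, h2]
    zify at h ⊢
    nlinarith [sq_nonneg ((a : ℤ) - b), sq_nonneg ((a : ℤ) + b)]

lemma sumA (u : V) : ∀ (s : ℕ) (v : V), G.dist v u = s →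
    ∑ P ∈ G.finsetWalkLength s v u, ((walkProdInit G (dnext G u) P : ℝ))⁻¹ ≤ 1 := by
  intro s
  induction s with
  | zero =>
    intro v hv
    by_cases hvu : v = u
    · subst hvu
      have hset : G.finsetWalkLength 0 v v = {SimpleGraph.Walk.nil} := by
        ext P
        simp [SimpleGraph.mem_finsetWalkLength_iff, SimpleGraph.Walk.length_eq_zero_iff]
      rw [hset]
      simp [walkProdInit]
    · have hset : G.finsetWalkLength 0 v u = ∅ := by
        ext P
        simp only [SimpleGraph.mem_finsetWalkLength_iff, Finset.notMem_empty, iff_false]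
        intro hP
        exact hvu (SimpleGraph.Walk.eq_of_length_eq_zero hP)
      rw [hset]
      simp
  | succ s ih =>
    intro v hv
    have key : ∑ a ∈ ((G.neighborFinset v).filter (fun w => G.dist w u + 1 = G.dist v u)).sigma
            (fun w => G.finsetWalkLength s w u),
            (((dnext G u v : ℝ))⁻¹ * ((walkProdInit G (dnext G u) a.2 : ℝ))⁻¹)
        = ∑ P ∈ G.finsetWalkLength (s+1) v u, ((walkProdInit G (dnext G u) P : ℝ))⁻¹ := by
      apply Finset.sum_bij
        (i := fun a ha => a.2.cons ((G.mem_neighborFinset v a.1).mp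
          (Finset.mem_filter.mp (Finset.mem_sigma.mp ha).1).1))
      · intro a ha
        rw [SimpleGraph.mem_finsetWalkLength_iff, SimpleGraph.Walk.length_cons]
        have := SimpleGraph.mem_finsetWalkLength_iff.mp (Finset.mem_sigma.mp ha).2
        omega
      · rintro ⟨w₁, q₁⟩ h₁ ⟨w₂, q₂⟩ h₂ hEq
        simp only [SimpleGraph.Walk.cons.injEq] at hEq
        obtain ⟨rfl, hq⟩ := hEq
        rw [heq_iff_eq] at hq
        rw [hq]
      · intro P hP
        have hPlen := SimpleGraph.mem_finsetWalkLength_iff.mp hP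
        cases P with
        | nil => simp at hPlen
        | @cons _ w _ hadj q =>
          have hqlen : q.length = s := by
            simpa using hPlen
          have hwu : G.dist w u = s := by
            have h1 : G.dist w u ≤ s := hqlen ▸ SimpleGraph.dist_le q
            have h2 : G.dist v u ≤ G.dist w u + 1 := by
              obtain ⟨R, hR⟩ := (q.reachable).exists_walk_length_eq_dist
              simpa [hR] using SimpleGraph.dist_le (R.cons hadj)
            omega
          refine ⟨⟨w, q⟩, Finset.mem_sigma.mpr ⟨Finset.mem_filter.mpr ⟨?_, (by omega : G.dist w u + 1 = G.dist v u)⟩, ?_⟩, rfl⟩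
          · exact (G.mem_neighborFinset v w).mpr hadj
          · exact SimpleGraph.mem_finsetWalkLength_iff.mpr hqlen
      · intro a ha
        rw [walkProdInit_cons]
        push_cast
        rw [mul_inv]
    rw [← key, Finset.sum_sigma]
    calc ∑ w ∈ (G.neighborFinset v).filter (fun w => G.dist w u + 1 = G.dist v u),
            ∑ q ∈ G.finsetWalkLength s w u,
            (((dnext G u v : ℝ))⁻¹ * ((walkProdInit G (dnext G u) q : ℝ))⁻¹)
        ≤ ∑ w ∈ (G.neighborFinset v).filter (fun w => G.dist w u + 1 = G.dist v u),
            ((dnext G u v : ℝ))⁻¹ * 1 := by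
          apply Finset.sum_le_sum
          intro w hw
          rw [← Finset.mul_sum]
          apply mul_le_mul_of_nonneg_left _ (by positivity)
          apply ih
          have := (Finset.mem_filter.mp hw).2
          omega
      _ ≤ 1 := by
          rw [Finset.sum_const, mul_one, nsmul_eq_mul]
          have hcard : ((G.neighborFinset v).filter
              (fun w => G.dist w u + 1 = G.dist v u)).card = dnext G u v := rfl
          rw [hcard]
          by_cases hc : (dnext G u v : ℝ) = 0
          · simp [hc]
          · rw [mul_inv_cancel₀ hc]

lemma sumB (x y : V) (t : ℕ) (ht : G.dist x y = t) :
    ∑ P ∈ G.finsetWalkLength t x y, ((walkProdTail G (dnext G x) P : ℝ))⁻¹ ≤ 1 := by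
  have h := sumA (G := G) x t y (by rw [SimpleGraph.dist_comm]; exact ht)
  refine le_trans (le_of_eq ?_) h
  apply Finset.sum_bij (i := fun P _ => P.reverse)
  · intro P hP
    rw [SimpleGraph.mem_finsetWalkLength_iff, SimpleGraph.Walk.length_reverse]
    exact SimpleGraph.mem_finsetWalkLength_iff.mp hP
  · intro P₁ _ P₂ _ hEq
    exact SimpleGraph.Walk.reverse_injective hEq
  · intro Q hQ
    refine ⟨Q.reverse, ?_, SimpleGraph.Walk.reverse_reverse Q⟩
    rw [SimpleGraph.mem_finsetWalkLength_iff, SimpleGraph.Walk.length_reverse]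
    exact SimpleGraph.mem_finsetWalkLength_iff.mp hQ
  · intro P _
    rw [walkProdInit_reverse]

lemma claimD (Δ : ℕ) (hΔ : ∀ v : V, G.degree v ≤ Δ) (x y : V) (t : ℕ)
    (ht : G.dist x y = t) :
    ∀ (s : ℕ), s + 2 ≤ t → ∀ (v : V) (P : G.Walk v y), P.length = s → G.dist v y = s →
      G.dist x v + s = t →
      (1 ≤ dnext G x v * (walkProdInit G (dnext G y) P * walkProdTail G (dnext G x) P) ∧
      dnext G x v * (walkProdInit G (dnext G y) P * walkProdTail G (dnext G x) P) ≤
        Δ * (Δ - 1) ^ (min s 1) * ((Δ / 2) * ((Δ + 1) / 2)) ^ (s - 1)) := by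
  intro s
  induction s with
  | zero =>
    intro hst v P hPlen hdist hsum
    have hvy : v = y := SimpleGraph.Walk.eq_of_length_eq_zero hPlen
    subst hvy
    have hPnil : P = SimpleGraph.Walk.nil := SimpleGraph.Walk.eq_nil_iff_nil.mpr (SimpleGraph.Walk.length_eq_zero_iff.mp hPlen)
    subst hPnil
    have hxv_ne : G.dist v x ≠ 0 := by rw [SimpleGraph.dist_comm]; omega
    have h1 : 1 ≤ dnext G x v := dnext_pos_of_dist hxv_ne
    have h2 : dnext G x v ≤ Δ := (dnext_le_degree x v).trans (hΔ v)
    simp only [walkProdInit, walkProdTail, SimpleGraph.Walk.support_nil]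
    simpa using ⟨h1, h2⟩
  | succ s ih =>
    intro hst v P hPlen hdistv hsum
    cases P with
    | nil => simp at hPlen
    | @cons _ w _ hadj q =>
      have hqlen : q.length = s := by simpa using hPlen
      have hwy : G.dist w y = s := by
        have h1 : G.dist w y ≤ s := hqlen ▸ SimpleGraph.dist_le q
        have h2 : G.dist v y ≤ G.dist w y + 1 := by
          obtain ⟨R, hR⟩ := (q.reachable).exists_walk_length_eq_dist
          simpa [hR] using SimpleGraph.dist_le (R.cons hadj)
        omega
      have hxv_ne : G.dist x v ≠ 0 := by omega
      have hrxv : G.Reachable x v := SimpleGraph.Reachable.of_dist_ne_zero hxv_ne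
      have hxw : G.dist x w + s = t := by
        have hle : G.dist x w ≤ G.dist x v + 1 := by
          obtain ⟨W, hW⟩ := hrxv.exists_walk_length_eq_dist
          simpa [hW] using SimpleGraph.dist_le (W.append (SimpleGraph.Walk.nil.cons hadj))
        have hge : G.dist x y ≤ G.dist x w + s := by
          obtain ⟨W2, hW2⟩ := (hrxv.trans hadj.reachable).exists_walk_length_eq_dist
          simpa [hW2, hqlen] using SimpleGraph.dist_le (W2.append q)
        omega
      obtain ⟨hE1, hE2⟩ := ih (by omega) w q hqlen hwy hxw
      rw [walkProdInit_cons, walkProdTail_cons]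
      set A := dnext G x v with hAdef
      set B' := dnext G y v with hBdef
      set E := dnext G x w * (walkProdInit G (dnext G y) q * walkProdTail G (dnext G x) q)
        with hEdef
      have hrearr : A * (B' * walkProdInit G (dnext G y) q *
          (dnext G x w * walkProdTail G (dnext G x) q)) = (A * B') * E := by
        rw [hEdef]; ring
      rw [hrearr]
      have hAB : B' + A ≤ Δ := by
        refine le_trans ?_ (hΔ v)
        apply dnext_add_dnext_le
        omega
      have hA1 : 1 ≤ A := dnext_pos_of_dist (by rw [SimpleGraph.dist_comm]; omega)
      have hB1 : 1 ≤ B' := dnext_pos_of_adj hadj (by omega)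
      rcases Nat.eq_zero_or_pos s with rfl | hs
      · have hBeq : B' = 1 := dnext_eq_one_of_dist_one (by omega)
        have hAle : A ≤ Δ - 1 := by omega
        have hEle : E ≤ Δ := by simpa using hE2
        constructor
        · have := Nat.mul_le_mul (Nat.mul_le_mul hA1 hB1) hE1
          simpa using this
        · have : (A * B') * E ≤ (Δ - 1) * Δ := by
            rw [hBeq, mul_one]
            exact Nat.mul_le_mul hAle hEle
          simpa [Nat.mul_comm] using this
      · have hBB : B' * A ≤ (Δ / 2) * ((Δ + 1) / 2) := mul_le_half_mul_half hAB
        have hmin : min s 1 = 1 := by omega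
        rw [hmin] at hE2
        constructor
        · have := Nat.mul_le_mul (Nat.mul_le_mul hA1 hB1) hE1
          simpa using this
        · have hstep : (A * B') * E ≤ ((Δ / 2) * ((Δ + 1) / 2)) *
              (Δ * (Δ - 1) ^ 1 * ((Δ / 2) * ((Δ + 1) / 2)) ^ (s - 1)) := by
            exact Nat.mul_le_mul (by rw [Nat.mul_comm]; exact hBB) hE2
          refine hstep.trans (le_of_eq ?_)
          have hpow : ((Δ / 2) * ((Δ + 1) / 2)) * ((Δ / 2) * ((Δ + 1) / 2)) ^ (s - 1)
              = ((Δ / 2) * ((Δ + 1) / 2)) ^ s := by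
            rw [← pow_succ']
            congr 1
            omega
          have hmin2 : min (s + 1) 1 = 1 := by omega
          rw [hmin2]
          rw [show s + 1 - 1 = s from rfl]
          calc ((Δ / 2) * ((Δ + 1) / 2)) * (Δ * (Δ - 1) ^ 1 * ((Δ / 2) * ((Δ + 1) / 2)) ^ (s - 1))
              = Δ * (Δ - 1) ^ 1 * (((Δ / 2) * ((Δ + 1) / 2)) *
                ((Δ / 2) * ((Δ + 1) / 2)) ^ (s - 1)) := by ring
            _ = Δ * (Δ - 1) ^ 1 * ((Δ / 2) * ((Δ + 1) / 2)) ^ s := by rw [hpow]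

theorem simple_graph_shortest_paths_sq_le' {V : Type} [Fintype V]
    (G : SimpleGraph V) (Δ : ℕ) [DecidableRel G.Adj] (hΔ2 : 2 ≤ Δ)
    (hΔ : ∀ v : V, G.degree v ≤ Δ)
    (x y : V) (t : ℕ) (ht : G.dist x y = t) (ht3 : 3 ≤ t) :
    Nat.card {p : G.Walk x y // p.length = t} ^ 2 ≤
      Δ ^ 2 * (Δ - 1) ^ 2 * ((Δ / 2) * ((Δ + 1) / 2)) ^ (t - 3) := by
  classical
  set C : ℕ := Δ ^ 2 * (Δ - 1) ^ 2 * ((Δ / 2) * ((Δ + 1) / 2)) ^ (t - 3) with hCdef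
  set S := G.finsetWalkLength t x y with hSdef
  -- identify the cardinality
  letI : Fintype {p : G.Walk x y // p.length = t} :=
    Fintype.subtype S (fun p => SimpleGraph.mem_finsetWalkLength_iff)
  have hcard : Nat.card {p : G.Walk x y // p.length = t} = S.card := by
    rw [Nat.card_eq_fintype_card]
    exact Fintype.card_of_subtype S (fun p => SimpleGraph.mem_finsetWalkLength_iff)
  -- pointwise bound on the product of in/out degrees along a shortest path
  have hpoint : ∀ P ∈ S, 1 ≤ walkProdInit G (dnext G y) P * walkProdTail G (dnext G x) P ∧
      walkProdInit G (dnext G y) P * walkProdTail G (dnext G x) P ≤ C := by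
    intro P hP
    have hPlen : P.length = t := SimpleGraph.mem_finsetWalkLength_iff.mp hP
    cases P with
    | nil => rw [SimpleGraph.Walk.length_nil] at hPlen; omega
    | @cons _ v1 _ hadj1 q1 =>
      cases q1 with
      | nil => rw [SimpleGraph.Walk.length_cons, SimpleGraph.Walk.length_nil] at hPlen; omega
      | @cons _ v2 _ hadj2 q2 =>
        have hq2len : q2.length = t - 2 := by
          simp only [SimpleGraph.Walk.length_cons] at hPlen; omega
        have hv1y : G.dist v1 y = t - 1 := by
          have h1 : G.dist v1 y ≤ t - 1 := by
            have := SimpleGraph.dist_le (q2.cons hadj2)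
            simp only [SimpleGraph.Walk.length_cons] at this
            omega
          have h2 : G.dist x y ≤ G.dist v1 y + 1 := by
            obtain ⟨R, hR⟩ := ((q2.cons hadj2).reachable).exists_walk_length_eq_dist
            simpa [hR] using SimpleGraph.dist_le (R.cons hadj1)
          omega
        have hxv1 : G.dist x v1 = 1 := SimpleGraph.dist_eq_one_iff_adj.mpr hadj1
        have hv2y : G.dist v2 y = t - 2 := by
          have h1 : G.dist v2 y ≤ t - 2 := hq2len ▸ SimpleGraph.dist_le q2
          have h2 : G.dist v1 y ≤ G.dist v2 y + 1 := by
            obtain ⟨R, hR⟩ := (q2.reachable).exists_walk_length_eq_dist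
            simpa [hR] using SimpleGraph.dist_le (R.cons hadj2)
          omega
        have hxv2 : G.dist x v2 = 2 := by
          have h1 : G.dist x v2 ≤ 2 := by
            have := SimpleGraph.dist_le ((SimpleGraph.Walk.nil.cons hadj2).cons hadj1)
            simpa using this
          have h2 : G.dist x y ≤ G.dist x v2 + (t - 2) := by
            have hr : G.Reachable x v2 := ((SimpleGraph.Walk.nil.cons hadj2).cons hadj1).reachable
            obtain ⟨W, hW⟩ := hr.exists_walk_length_eq_dist
            simpa [hW, hq2len] using SimpleGraph.dist_le (W.append q2)
          omega
        obtain ⟨hE1, hE2⟩ := claimD Δ hΔ x y t ht (t - 2) (by omega) v2 q2 hq2len hv2y (by omega)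
        have hmin : min (t - 2) 1 = 1 := by omega
        rw [hmin, pow_one] at hE2
        rw [walkProdInit_cons, walkProdInit_cons, walkProdTail_cons, walkProdTail_cons]
        set E := dnext G x v2 * (walkProdInit G (dnext G y) q2 * walkProdTail G (dnext G x) q2)
          with hEdef
        have hrearr : dnext G y x * (dnext G y v1 * walkProdInit G (dnext G y) q2) *
            (dnext G x v1 * (dnext G x v2 * walkProdTail G (dnext G x) q2)) =
            dnext G y x * (dnext G y v1 * dnext G x v1) * E := by
          rw [hEdef]; ring
        rw [hrearr]
        have hDyx_le : dnext G y x ≤ Δ := (dnext_le_degree y x).trans (hΔ x)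
        have hDyx_1 : 1 ≤ dnext G y x := dnext_pos_of_dist (by omega)
        have hDxv1 : dnext G x v1 = 1 :=
          dnext_eq_one_of_dist_one (by rw [SimpleGraph.dist_comm]; omega)
        have hsum_v1 : dnext G y v1 + dnext G x v1 ≤ Δ := by
          refine le_trans ?_ (hΔ v1)
          apply dnext_add_dnext_le
          omega
        have hDyv1_le : dnext G y v1 ≤ Δ - 1 := by omega
        have hDyv1_1 : 1 ≤ dnext G y v1 := dnext_pos_of_adj hadj2 (by omega)
        constructor
        · have := Nat.mul_le_mul (Nat.mul_le_mul hDyx_1 (Nat.mul_le_mul hDyv1_1 (le_of_eq hDxv1.symm))) hE1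
          simpa using this
        · have hb : dnext G y x * (dnext G y v1 * dnext G x v1) * E ≤
              Δ * ((Δ - 1) * 1) * (Δ * (Δ - 1) * ((Δ / 2) * ((Δ + 1) / 2)) ^ (t - 3)) := by
            exact Nat.mul_le_mul (Nat.mul_le_mul hDyx_le
              (Nat.mul_le_mul hDyv1_le (le_of_eq hDxv1))) hE2
          refine hb.trans (le_of_eq ?_)
          rw [hCdef]; ring
  -- analytic step: Cauchy–Schwarz
  have hf : ∑ P ∈ S, ((walkProdInit G (dnext G y) P : ℝ))⁻¹ ≤ 1 := sumA y t x ht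
  have hg : ∑ P ∈ S, ((walkProdTail G (dnext G x) P : ℝ))⁻¹ ≤ 1 := sumB x y t ht
  have hfg : ∀ P ∈ S, (1 : ℝ) ≤ (C : ℝ) *
      (((walkProdInit G (dnext G y) P : ℝ))⁻¹ * ((walkProdTail G (dnext G x) P : ℝ))⁻¹) := by
    intro P hP
    obtain ⟨h1, h2⟩ := hpoint P hP
    have hne : ((walkProdInit G (dnext G y) P * walkProdTail G (dnext G x) P : ℕ) : ℝ) ≠ 0 := by
      exact_mod_cast Nat.one_le_iff_ne_zero.mp h1
    have hinv : ((walkProdInit G (dnext G y) P : ℝ))⁻¹ * ((walkProdTail G (dnext G x) P : ℝ))⁻¹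
        = (((walkProdInit G (dnext G y) P * walkProdTail G (dnext G x) P : ℕ) : ℝ))⁻¹ := by
      push_cast
      rw [mul_inv]
    rw [hinv]
    have hle : ((walkProdInit G (dnext G y) P * walkProdTail G (dnext G x) P : ℕ) : ℝ) ≤ (C : ℝ) :=
      Nat.cast_le.mpr h2
    calc (1 : ℝ) = ((walkProdInit G (dnext G y) P * walkProdTail G (dnext G x) P : ℕ) : ℝ) *
          (((walkProdInit G (dnext G y) P * walkProdTail G (dnext G x) P : ℕ) : ℝ))⁻¹ := by
          rw [mul_inv_cancel₀ hne]
      _ ≤ _ := by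
          apply mul_le_mul_of_nonneg_right hle (by positivity)
  have hn : (S.card : ℝ) ≤ Real.sqrt C := by
    calc (S.card : ℝ) = ∑ _P ∈ S, (1 : ℝ) := by simp
      _ ≤ ∑ P ∈ S, Real.sqrt C * (Real.sqrt ((walkProdInit G (dnext G y) P : ℝ))⁻¹ *
            Real.sqrt ((walkProdTail G (dnext G x) P : ℝ))⁻¹) := by
          apply Finset.sum_le_sum
          intro P hP
          calc (1 : ℝ) = Real.sqrt 1 := Real.sqrt_one.symm
            _ ≤ Real.sqrt ((C : ℝ) * (((walkProdInit G (dnext G y) P : ℝ))⁻¹ *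
                ((walkProdTail G (dnext G x) P : ℝ))⁻¹)) := Real.sqrt_le_sqrt (hfg P hP)
            _ = _ := by
                rw [Real.sqrt_mul (by positivity), Real.sqrt_mul (by positivity)]
      _ = Real.sqrt C * ∑ P ∈ S, Real.sqrt ((walkProdInit G (dnext G y) P : ℝ))⁻¹ *
            Real.sqrt ((walkProdTail G (dnext G x) P : ℝ))⁻¹ := by
          rw [Finset.mul_sum]
      _ ≤ Real.sqrt C * (Real.sqrt (∑ P ∈ S, ((walkProdInit G (dnext G y) P : ℝ))⁻¹) *
            Real.sqrt (∑ P ∈ S, ((walkProdTail G (dnext G x) P : ℝ))⁻¹)) := by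
          apply mul_le_mul_of_nonneg_left _ (Real.sqrt_nonneg _)
          exact Real.sum_sqrt_mul_sqrt_le S (fun P => by positivity) (fun P => by positivity)
      _ ≤ Real.sqrt C * (1 * 1) := by
          apply mul_le_mul_of_nonneg_left _ (Real.sqrt_nonneg _)
          have s1 : Real.sqrt (∑ P ∈ S, ((walkProdInit G (dnext G y) P : ℝ))⁻¹) ≤ 1 := by
            rw [show (1 : ℝ) = Real.sqrt 1 from Real.sqrt_one.symm]
            exact Real.sqrt_le_sqrt hf
          have s2 : Real.sqrt (∑ P ∈ S, ((walkProdTail G (dnext G x) P : ℝ))⁻¹) ≤ 1 := by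
            rw [show (1 : ℝ) = Real.sqrt 1 from Real.sqrt_one.symm]
            exact Real.sqrt_le_sqrt hg
          exact mul_le_mul s1 s2 (Real.sqrt_nonneg _) zero_le_one
      _ = Real.sqrt C := by ring
  have hsq : ((S.card : ℝ)) ^ 2 ≤ (C : ℝ) := by
    calc ((S.card : ℝ)) ^ 2 ≤ (Real.sqrt C) ^ 2 := by
          apply pow_le_pow_left₀ (by positivity) hn
      _ = (C : ℝ) := Real.sq_sqrt (by positivity)
    
  rw [hcard]
  exact_mod_cast hsq



/-- In a simple graph of maximum degree at most Δ ≥ 2, for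
vertices at distance t ≥ 3, the number of shortest paths satisfies
n² ≤ Δ²(Δ-1)² · (⌊Δ/2⌋·⌈Δ/2⌉)^(t-3). -/
theorem simple_graph_shortest_paths_sq_le {V : Type} [Fintype V]
    (G : SimpleGraph V) (Δ : ℕ) [DecidableRel G.Adj] (hΔ2 : 2 ≤ Δ)
    (hΔ : ∀ v : V, G.degree v ≤ Δ)
    (x y : V) (t : ℕ) (ht : G.dist x y = t) (ht3 : 3 ≤ t) :
    Nat.card {p : G.Walk x y // p.length = t} ^ 2 ≤
      Δ ^ 2 * (Δ - 1) ^ 2 * ((Δ / 2) * ((Δ + 1) / 2)) ^ (t - 3) := by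
  exact simple_graph_shortest_paths_sq_le' G Δ hΔ2 hΔ x y t ht ht3
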